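/- Let n ≥ 1 and t be integers, and for each integer t let B_t := {(j_1,…,j_n) ∈ ℤ^n : 1 ≤ j_k ≤ t−k for all 1 ≤ k ≤ n}. For a permutation σ of {1,…,n} let σ(B_t) := {(j_{σ(1)},…,j_{σ(n)}) : (j_1,…,j_n) ∈ B_t}. If t ≥ n+1 then the cardinality of the union ∪_σ σ(B_t) over all permutations σ of {1,…,n} equals (t−n)·t^{n−1}, and if t ≤ n then this union is empty. -/

import Mathlib

open Finset

namespace Stmt0Aux

variable {n T : ℕ}

/-- number of coordinates of `w` equal to `v` -/
def cnt (w : Fin n → ZMod T) (v : ZMod T) : ℕ :=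
  (univ.filter fun m => w m = v).card

/-- partial-sum defect function -/
def G (w : Fin n → ZMod T) (j : ℕ) : ℤ :=
  (∑ r ∈ range j, (cnt w (r : ZMod T) : ℤ)) - j

lemma sum_range_cast [NeZero T] {M : Type*} [AddCommMonoid M] (f : ZMod T → M) :
    ∑ i ∈ range T, f (i : ZMod T) = ∑ v, f v := by
  refine Finset.sum_nbij' (i := fun i => (i : ZMod T)) (j := fun v => v.val)
    (fun a _ => mem_univ _) (fun v _ => mem_range.2 (ZMod.val_lt v))
    (fun a ha => ZMod.val_cast_of_lt (mem_range.1 ha))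
    (fun v _ => (ZMod.natCast_val v).trans (ZMod.cast_id _ _)) (fun a _ => rfl)

lemma sum_cnt [NeZero T] (w : Fin n → ZMod T) : ∑ v, cnt w v = n := by
  have := Finset.card_eq_sum_card_fiberwise (f := w) (s := univ) (t := univ)
    (fun x _ => mem_univ _)
  simpa [cnt] using this.symm

lemma G_add_T [NeZero T] (w : Fin n → ZMod T) (j : ℕ) :
    G w (j + T) = G w j + n - T := by
  have h : ∑ r ∈ range (j + T), (cnt w (r : ZMod T) : ℤ)
      = ∑ r ∈ range j, (cnt w (r : ZMod T) : ℤ) + ∑ i ∈ range T, (cnt w ((j + i : ℕ) : ZMod T) : ℤ) := by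
    rw [Finset.range_add, Finset.sum_union, Finset.sum_map]
    · rfl
    · exact Finset.disjoint_left.2 (by
        intro a ha hb
        simp only [Finset.mem_map, Finset.mem_range, addLeftEmbedding_apply] at ha hb
        omega)
  have h2 : ∑ i ∈ range T, (cnt w ((j + i : ℕ) : ZMod T) : ℤ)
      = ∑ v, (cnt w ((j : ZMod T) + v) : ℤ) := by
    rw [← sum_range_cast (fun v => (cnt w ((j : ZMod T) + v) : ℤ))]
    exact Finset.sum_congr rfl (by intro i _; push_cast; ring_nf)
  have h3 : ∑ v, (cnt w ((j : ZMod T) + v) : ℤ) = (n : ℤ) := by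
    rw [show (∑ v, (cnt w ((j : ZMod T) + v) : ℤ)) = ∑ v, (cnt w v : ℤ) from
      Fintype.sum_equiv (Equiv.addLeft (j : ZMod T)) _ _ (fun v => rfl), ← Nat.cast_sum]
    exact_mod_cast sum_cnt w
  simp only [G, h, h2, h3]
  push_cast
  ring

lemma G_succ (w : Fin n → ZMod T) (j : ℕ) :
    G w (j + 1) = G w j + cnt w (j : ZMod T) - 1 := by
  simp [G, Finset.sum_range_succ]; ring

lemma G_le_succ (w : Fin n → ZMod T) (j : ℕ) : G w j ≤ G w (j + 1) + 1 := by
  rw [G_succ]; have : (0:ℤ) ≤ cnt w (j : ZMod T) := Nat.cast_nonneg _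
  omega

/-- max of `G` on window `[s, s+T]`, which equals sup over `[s, ∞)` -/
def M (w : Fin n → ZMod T) (s : ℕ) : ℤ :=
  (Finset.Icc s (s + T)).sup' (Finset.nonempty_Icc.2 (Nat.le_add_right _ _)) (G w)

variable [NeZero T]

lemma hnT' : 0 < T := Nat.pos_of_ne_zero (NeZero.ne T)

lemma G_le_M (w : Fin n → ZMod T) (hn : n ≤ T) :
    ∀ x s : ℕ, s ≤ x → G w x ≤ M w s := by
  intro x
  induction x using Nat.strong_induction_on with
  | _ x ih =>
    intro s hsx
    by_cases hx : x ≤ s + T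
    · exact Finset.le_sup' (G w) (Finset.mem_Icc.2 ⟨hsx, hx⟩)
    · have hT : 0 < T := hnT'
      have hx' : x = (x - T) + T := by omega
      have := G_add_T w (x - T)
      rw [hx', this]
      have h1 : G w (x - T) ≤ M w s := ih (x - T) (by omega) s (by omega)
      have : (n : ℤ) ≤ T := by exact_mod_cast hn
      omega

lemma exists_M (w : Fin n → ZMod T) (s : ℕ) :
    ∃ x ∈ Finset.Icc s (s + T), M w s = G w x :=
  Finset.exists_mem_eq_sup' _ (G w)

lemma M_succ_le (w : Fin n → ZMod T) (hn : n ≤ T) (s : ℕ) : M w (s + 1) ≤ M w s := by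
  apply Finset.sup'_le
  intro x hx
  exact G_le_M w hn x s (by have := (Finset.mem_Icc.1 hx).1; omega)

lemma M_le_succ (w : Fin n → ZMod T) (hn : n ≤ T) (s : ℕ) : M w s ≤ M w (s + 1) + 1 := by
  obtain ⟨x, hx, hMx⟩ := exists_M w s
  rw [hMx]
  rcases Nat.lt_or_ge s x with h | h
  · have := G_le_M w hn x (s + 1) (by omega)
    omega
  · have hxs : x = s := by have := (Finset.mem_Icc.1 hx).1; omega
    subst hxs
    have h1 := G_le_succ w x
    have h2 := G_le_M w hn (x + 1) (x + 1) le_rfl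
    omega

lemma M_add_T (w : Fin n → ZMod T) (hn : n ≤ T) (s : ℕ) :
    M w (s + T) = M w s + n - T := by
  apply le_antisymm
  · obtain ⟨x, hx, hMx⟩ := exists_M w (s + T)
    rw [hMx]
    have hx1 := Finset.mem_Icc.1 hx
    have hx' : x = (x - T) + T := by omega
    rw [hx', G_add_T]
    have := G_le_M w hn (x - T) s (by omega)
    omega
  · obtain ⟨x, hx, hMx⟩ := exists_M w s
    have hx1 := Finset.mem_Icc.1 hx
    have h1 := G_add_T w x
    have h2 := G_le_M w hn (x + T) (s + T) (by omega)
    omega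

/-- `s` is a "drop" point -/
def Drop (w : Fin n → ZMod T) (s : ℕ) : Prop := M w (s + 1) < M w s

instance (w : Fin n → ZMod T) (s : ℕ) : Decidable (Drop w s) := by
  unfold Drop; infer_instance

lemma card_drops (w : Fin n → ZMod T) (hn : n ≤ T) :
    (((range T).filter (fun s => Drop w s)).card : ℤ) = T - n := by
  have htel : ∑ s ∈ range T, (M w s - M w (s + 1)) = M w 0 - M w T := 
    Finset.sum_range_sub' (fun s => M w s) T
  have hMT : M w T = M w 0 + n - T := by simpa using M_add_T w hn 0
  have hsum : ∑ s ∈ range T, (M w s - M w (s + 1)) = (T : ℤ) - n := by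
    rw [htel, hMT]; ring
  have hcongr : ∑ s ∈ range T, (M w s - M w (s + 1))
      = ∑ s ∈ range T, (if Drop w s then (1:ℤ) else 0) := by
    apply Finset.sum_congr rfl
    intro s _
    have h1 := M_succ_le w hn s
    have h2 := M_le_succ w hn s
    by_cases h : Drop w s
    · simp only [if_pos h]; unfold Drop at h; omega
    · simp only [if_neg h]; unfold Drop at h; omega
  rw [Finset.sum_boole] at hcongr
  rw [← hsum, hcongr]

/-- the shifted word starting at `s` stays strictly below its start -/
def GoodAt (w : Fin n → ZMod T) (s : ℕ) : Prop :=
  ∀ j, 1 ≤ j → j ≤ T → G w (s + j) < G w s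

lemma goodAt_iff_drop (w : Fin n → ZMod T) (hn : n < T) (s : ℕ) :
    GoodAt w s ↔ Drop w s := by
  constructor
  · intro hg
    obtain ⟨x, hx, hMx⟩ := exists_M w (s + 1)
    have hx1 := Finset.mem_Icc.1 hx
    unfold Drop
    have hGsM : G w s ≤ M w s := G_le_M w hn.le s s le_rfl
    rcases Nat.lt_or_ge (s + T) x with h | h
    · -- x = s + 1 + T
      have hx2 : x = (s + 1) + T := by omega
      have h3 := G_add_T w (s + 1)
      have h4 := hg 1 le_rfl (by omega)
      rw [hMx, hx2, h3]
      omega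
    · have h4 := hg (x - s) (by omega) (by omega)
      rw [show s + (x - s) = x by omega] at h4
      omega
  · intro hd
    have hMsG : M w s = G w s := by
      obtain ⟨x, hx, hMx⟩ := exists_M w s
      have hx1 := Finset.mem_Icc.1 hx
      rcases Nat.lt_or_ge s x with h | h
      · exfalso
        have := G_le_M w hn.le x (s + 1) (by omega)
        unfold Drop at hd
        omega
      · have : x = s := by omega
        rw [hMx, this]
    intro j hj1 hjT
    have := G_le_M w hn.le (s + j) (s + 1) (by omega)
    unfold Drop at hd
    omega

/-- goodness of a word: prefix counts stay strictly low -/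
def Good (w : Fin n → ZMod T) : Prop :=
  ∀ j < T, (univ.filter fun m => (w m).val ≤ j).card ≤ j

instance (w : Fin n → ZMod T) : Decidable (Good w) := by
  unfold Good; exact Nat.decidableBallLT _ _

lemma count_lt (w : Fin n → ZMod T) (c : ZMod T) (s : ℕ) (hs : (s : ZMod T) = -c)
    (j : ℕ) (hj : j ≤ T) :
    ((univ.filter fun m => (w m + c).val < j).card : ℤ) = G w (s + j) - G w s + j := by
  have hcard : (univ.filter fun m => (w m + c).val < j).card
      = ∑ r ∈ range j, (univ.filter fun m => (w m + c).val = r).card := by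
    rw [Finset.card_eq_sum_card_fiberwise (f := fun m => (w m + c).val)
      (t := range j) (fun m hm => by simpa using (Finset.mem_filter.1 hm).2)]
    apply Finset.sum_congr rfl
    intro r hr
    congr 1
    rw [Finset.filter_filter]
    apply Finset.filter_congr
    intro m _
    have := mem_range.1 hr
    constructor
    · intro h; omega
    · intro h; exact ⟨by omega, h⟩
  have hfib : ∀ r < j, (univ.filter fun m => (w m + c).val = r).card
      = cnt w (((s + r : ℕ) : ZMod T)) := by
    intro r hr
    unfold cnt
    congr 1
    apply Finset.filter_congr
    intro m _
    have hrT : r < T := by omega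
    constructor
    · intro h
      have : w m + c = (r : ZMod T) := by
        apply ZMod.val_injective
        rw [h, ZMod.val_cast_of_lt hrT]
      push_cast
      rw [hs]
      push_cast at this ⊢
      linear_combination this
    · intro h
      push_cast at h
      rw [hs] at h
      have : w m + c = (r : ZMod T) := by linear_combination h
      rw [this, ZMod.val_cast_of_lt hrT]
  have hsum : ∑ r ∈ range j, (univ.filter fun m => (w m + c).val = r).card
      = ∑ r ∈ range j, cnt w (((s + r : ℕ) : ZMod T)) := by
    exact Finset.sum_congr rfl fun r hr => hfib r (mem_range.1 hr)
  have hG : (∑ r ∈ range j, (cnt w (((s + r : ℕ) : ZMod T)) : ℤ))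
      = G w (s + j) - G w s + j := by
    unfold G
    have : ∑ r ∈ range (s + j), (cnt w ((r:ℕ) : ZMod T) : ℤ)
        = ∑ r ∈ range s, (cnt w ((r:ℕ) : ZMod T) : ℤ)
          + ∑ r ∈ range j, (cnt w (((s + r : ℕ)) : ZMod T) : ℤ) := by
      rw [Finset.range_add, Finset.sum_union, Finset.sum_map]
      · rfl
      · exact Finset.disjoint_left.2 (by
          intro a ha hb
          simp only [Finset.mem_map, Finset.mem_range, addLeftEmbedding_apply] at ha hb
          omega)
    push_cast at this ⊢
    omega
  rw [hcard]
  push_cast [hsum]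
  push_cast at hG
  omega

lemma good_shift_iff (w : Fin n → ZMod T) (c : ZMod T) (s : ℕ) (hs : (s : ZMod T) = -c) :
    Good (fun m => w m + c) ↔ GoodAt w s := by
  constructor
  · intro hg j hj1 hjT
    have h1 : (univ.filter fun m => (w m + c).val ≤ j - 1).card ≤ j - 1 :=
      hg (j - 1) (by omega)
    have h2 := count_lt w c s hs j hjT
    have h3 : (univ.filter fun m => (w m + c).val < j)
        = (univ.filter fun m => (w m + c).val ≤ j - 1) := by
      apply Finset.filter_congr; intro m _; constructor <;> intro h <;> omega
    rw [h3] at h2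
    have : ((j : ℤ)) - 1 = ((j - 1 : ℕ) : ℤ) := by omega
    omega
  · intro hg j hj
    show (univ.filter fun m => (w m + c).val ≤ j).card ≤ j
    have h2 := count_lt w c s hs (j + 1) (by omega)
    have h3 : (univ.filter fun m => (w m + c).val < j + 1)
        = (univ.filter fun m => (w m + c).val ≤ j) := by
      apply Finset.filter_congr; intro m _; constructor <;> intro h <;> omega
    rw [h3] at h2
    have h4 := hg (j + 1) (by omega) (by omega)
    omega

lemma card_good_shifts (w : Fin n → ZMod T) (hn : n < T) :
    ((univ.filter fun c : ZMod T => Good (fun m => w m + c)).card : ℤ) = T - n := by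
  rw [← card_drops w hn.le]
  congr 1
  apply Finset.card_bij (i := fun (c : ZMod T) _ => (-c).val)
  · intro c hc
    simp only [Finset.mem_filter, Finset.mem_range]
    refine ⟨ZMod.val_lt _, ?_⟩
    rw [← goodAt_iff_drop w hn]
    rw [← good_shift_iff w c ((-c).val) (by rw [ZMod.natCast_val, ZMod.cast_id])]
    exact (Finset.mem_filter.1 hc).2
  · intro c1 h1 c2 h2 h
    have := congrArg (fun x : ℕ => ((x : ZMod T))) h
    simp only [ZMod.natCast_val, ZMod.cast_id] at this
    exact neg_injective this
  · intro s hs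
    simp only [Finset.mem_filter, Finset.mem_range] at hs
    refine ⟨-(s : ZMod T), ?_, ?_⟩
    · simp only [Finset.mem_filter, Finset.mem_univ, true_and]
      rw [good_shift_iff w _ s (by rw [neg_neg])]
      exact (goodAt_iff_drop w hn s).2 hs.2
    · rw [neg_neg, ZMod.val_cast_of_lt hs.1]

lemma card_goods (hn1 : 1 ≤ n) (hn : n < T) :
    ((univ.filter fun w : Fin n → ZMod T => Good w).card : ℤ)
      = ((T : ℤ) - n) * (T : ℤ) ^ (n - 1) := by
  have hT0 : (0:ℤ) < T := by exact_mod_cast hnT' (T := T)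
  have key : ∀ c : ZMod T,
      (∑ w : Fin n → ZMod T, if Good (fun m => w m + c) then (1:ℤ) else 0)
        = ∑ w : Fin n → ZMod T, if Good w then (1:ℤ) else 0 := by
    intro c
    apply Fintype.sum_bijective (fun w : Fin n → ZMod T => fun m => w m + c)
      (Equiv.piCongrRight (fun _ => Equiv.addRight c)).bijective
    intro w
    rfl
  have h1 : ∑ w : Fin n → ZMod T,
      ((univ.filter fun c : ZMod T => Good (fun m => w m + c)).card : ℤ)
      = (T : ℤ) ^ n * ((T : ℤ) - n) := by
    rw [Finset.sum_congr rfl (fun w _ => card_good_shifts w hn)]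
    have hcard : (Fintype.card (Fin n → ZMod T)) = T ^ n := by
      rw [Fintype.card_fun, ZMod.card, Fintype.card_fin]
    simp [Finset.sum_const, hcard]
    ring
  have h2 : ∑ w : Fin n → ZMod T,
      ((univ.filter fun c : ZMod T => Good (fun m => w m + c)).card : ℤ)
      = (T : ℤ) * ((univ.filter fun w : Fin n → ZMod T => Good w).card : ℤ) := by
    have : ∀ w : Fin n → ZMod T,
        ((univ.filter fun c : ZMod T => Good (fun m => w m + c)).card : ℤ)
          = ∑ c : ZMod T, if Good (fun m => w m + c) then (1:ℤ) else 0 := by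
      intro w
      rw [Finset.sum_boole]
    rw [Finset.sum_congr rfl (fun w _ => this w), Finset.sum_comm]
    rw [Finset.sum_congr rfl (fun c _ => key c)]
    have hG : (∑ w : Fin n → ZMod T, if Good w then (1:ℤ) else 0)
        = ((univ.filter fun w : Fin n → ZMod T => Good w).card : ℤ) := by
      rw [Finset.sum_boole]
    rw [Finset.sum_congr rfl (fun c _ => hG)]
    simp [Finset.sum_const, ZMod.card, mul_comm]
  have hpow : (T : ℤ) ^ (n - 1) * T = (T : ℤ) ^ n := by
    rw [← pow_succ, Nat.sub_add_cancel hn1]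
  have hmain : (T:ℤ) * ((univ.filter fun w : Fin n → ZMod T => Good w).card : ℤ)
      = (T:ℤ) * (((T:ℤ) - n) * (T:ℤ) ^ (n-1)) := by
    rw [← h2, h1, ← hpow]; ring
  exact mul_left_cancel₀ (ne_of_gt hT0) hmain

/-! ### Integer side -/

/-- threshold characterization -/
def Thr (n : ℕ) (t : ℤ) (x : Fin n → ℤ) : Prop :=
  (∀ m, 1 ≤ x m ∧ x m ≤ t - 1) ∧
  ∀ k : ℤ, 1 ≤ k → k ≤ t → ((univ.filter fun m => k ≤ x m).card : ℤ) ≤ t - k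

lemma mem_union_iff (n : ℕ) (t : ℤ) (x : Fin n → ℤ) :
    (x ∈ ⋃ σ : Equiv.Perm (Fin n), (fun j => j ∘ σ) ''
        {j : Fin n → ℤ | ∀ k : Fin n, 1 ≤ j k ∧ j k ≤ t - ((k.val : ℤ) + 1)})
    ↔ ∃ σ : Equiv.Perm (Fin n), ∀ m, 1 ≤ x m ∧ x m ≤ t - (((σ m).val : ℤ) + 1) := by
  simp only [Set.mem_iUnion, Set.mem_image, Set.mem_setOf_eq]
  constructor
  · rintro ⟨σ, j, hj, rfl⟩
    exact ⟨σ, fun m => hj (σ m)⟩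
  · rintro ⟨σ, hx⟩
    refine ⟨σ, x ∘ σ.symm, fun k => ?_, ?_⟩
    · have := hx (σ.symm k)
      simpa using this
    · funext m
      simp

lemma card_filter_le_perm (n : ℕ) (σ : Equiv.Perm (Fin n)) (p : Fin n → Prop)
    [DecidablePred p] :
    (univ.filter fun m => p (σ m)).card = (univ.filter p).card := by
  apply Finset.card_bij (i := fun m _ => σ m)
  · intro m hm; simp only [mem_filter, mem_univ, true_and] at hm ⊢; exact hm
  · intro a _ b _ h; exact σ.injective h
  · intro v hv
    exact ⟨σ.symm v, by simpa using (Finset.mem_filter.1 hv).2, by simp⟩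

lemma exists_perm_iff_thr (n : ℕ) (hn : 1 ≤ n) (t : ℤ) (ht : (n:ℤ) + 1 ≤ t)
    (x : Fin n → ℤ) :
    (∃ σ : Equiv.Perm (Fin n), ∀ m, 1 ≤ x m ∧ x m ≤ t - (((σ m).val : ℤ) + 1))
      ↔ Thr n t x := by
  constructor
  · rintro ⟨σ, hσ⟩
    constructor
    · intro m
      obtain ⟨h1, h2⟩ := hσ m
      have : (0:ℤ) ≤ ((σ m).val : ℤ) := Int.natCast_nonneg _
      exact ⟨h1, by omega⟩
    · intro k hk1 hkt
      have hsub : (univ.filter fun m => k ≤ x m).card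
          ≤ (univ.filter fun m => (((σ m).val : ℤ)) ≤ t - k - 1).card := by
        apply Finset.card_le_card
        intro m hm
        simp only [mem_filter, mem_univ, true_and] at hm ⊢
        have := (hσ m).2
        omega
      rw [card_filter_le_perm n σ (fun v => ((v.val : ℤ)) ≤ t - k - 1)] at hsub
      have hb : (univ.filter fun v : Fin n => ((v.val : ℤ)) ≤ t - k - 1).card
          ≤ (t - k).toNat := by
        rw [← Finset.card_range (t - k).toNat]
        apply Finset.card_le_card_of_injOn (fun v => v.val)
        · intro v hv
          simp only [Finset.mem_coe, mem_filter, mem_univ, true_and] at hv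
          simp only [Finset.mem_coe, Finset.mem_range]
          omega
        · intro a _ b _ h; exact Fin.val_injective h
      have : ((t - k).toNat : ℤ) = t - k := Int.toNat_of_nonneg (by omega)
      omega
  · rintro ⟨hb, hthr⟩
    classical
    set τ := Tuple.sort x with hτ
    have hmono := Tuple.monotone_sort x
    refine ⟨τ.symm.trans (Fin.revPerm), fun m => ⟨(hb m).1, ?_⟩⟩
    set i : Fin n := τ.symm m with hi
    have hvi : ((Equiv.trans τ.symm Fin.revPerm) m).val = n - 1 - i.val := by
      simp [Fin.val_rev, i]
      omega
    rw [hvi]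
    have hile : i.val ≤ n - 1 := by omega
    have hcast : ((n - 1 - i.val : ℕ) : ℤ) = (n : ℤ) - 1 - i.val := by omega
    rw [hcast]
    by_contra hcon
    push_neg at hcon
    set k : ℤ := t - n + i.val + 1 with hk
    have hxm : k ≤ x m := by omega
    have h1 := hthr k (by omega) (by omega)
    have h2 : (univ.filter fun i' : Fin n => i ≤ i').card
        ≤ (univ.filter fun m' => k ≤ x m').card := by
      apply Finset.card_le_card_of_injOn (fun i' => τ i')
      · intro i' hi'
        simp only [Finset.mem_coe, mem_filter, mem_univ, true_and] at hi' ⊢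
        have : x (τ i) ≤ x (τ i') := hmono hi'
        have hτi : τ i = m := by simp [hi]
        rw [hτi] at this
        omega
      · intro a _ b _ h; exact τ.injective h
    have h3 : (univ.filter fun i' : Fin n => i ≤ i').card = n - i.val := by
      rw [show (univ.filter fun i' : Fin n => i ≤ i') = Finset.Ici i from by ext v; simp]
      exact Fin.card_Ici i
    have : (t : ℤ) - k = (n : ℤ) - 1 - i.val := by omega
    have hiv : i.val < n := i.isLt
    omega

lemma thr_set_eq (n T : ℕ) [NeZero T] (hnT : n < T) :
    {x : Fin n → ℤ | Thr n (T:ℤ) x}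
      = ↑(((univ.filter fun f : Fin n → ZMod T => Good f)).image
          (fun f => fun m => (T : ℤ) - ((f m).val : ℤ))) := by
  have hT0 : 0 < T := hnT' (T := T)
  ext x
  simp only [Set.mem_setOf_eq, Finset.coe_image, Set.mem_image, Finset.mem_coe,
    Finset.mem_filter, Finset.mem_univ, true_and]
  constructor
  · rintro ⟨hb, hthr⟩
    refine ⟨fun m => (((T : ℤ) - x m).toNat : ZMod T), ?_, ?_⟩
    · -- Good
      have hval : ∀ m, ((((T : ℤ) - x m).toNat : ZMod T)).val = ((T : ℤ) - x m).toNat := by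
        intro m
        apply ZMod.val_cast_of_lt
        have := hb m
        omega
      intro j hj
      have hset : (univ.filter fun m => ((((T : ℤ) - x m).toNat : ZMod T)).val ≤ j)
          = (univ.filter fun m => ((T : ℤ) - (j:ℤ)) ≤ x m) := by
        apply Finset.filter_congr
        intro m _
        rw [hval m]
        have := hb m
        omega
      rw [hset]
      have := hthr ((T : ℤ) - j) (by omega) (by omega)
      omega
    · funext m
      have := hb m
      have hval : ((((T : ℤ) - x m).toNat : ZMod T)).val = ((T : ℤ) - x m).toNat := by
        apply ZMod.val_cast_of_lt; omega
      rw [hval]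
      omega
  · rintro ⟨f, hf, rfl⟩
    have hvlt : ∀ m, (f m).val < T := fun m => ZMod.val_lt _
    have hv1 : ∀ m, 1 ≤ (f m).val := by
      intro m
      by_contra h
      have h0 : (f m).val ≤ 0 := by omega
      have := hf 0 hT0
      have hmem : m ∈ univ.filter fun m' => (f m').val ≤ 0 :=
        Finset.mem_filter.2 ⟨Finset.mem_univ _, h0⟩
      have := Finset.card_pos.2 ⟨m, hmem⟩
      omega
    constructor
    · intro m
      have := hvlt m; have := hv1 m
      constructor <;> [skip; skip] <;> simp only [] <;> omega
    · intro k hk1 hkt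
      have hset : (univ.filter fun m => k ≤ (T : ℤ) - ((f m).val : ℤ))
          = (univ.filter fun m => (f m).val ≤ ((T:ℤ) - k).toNat) := by
        apply Finset.filter_congr
        intro m _
        omega
      have hj : ((T:ℤ) - k).toNat < T := by omega
      have := hf (((T:ℤ) - k).toNat) hj
      calc ((univ.filter fun m => k ≤ (T : ℤ) - ((f m).val : ℤ)).card : ℤ)
          = ((univ.filter fun m => (f m).val ≤ ((T:ℤ) - k).toNat).card : ℤ) := by rw [hset]
        _ ≤ (((T:ℤ) - k).toNat : ℤ) := by exact_mod_cast this
        _ = (T:ℤ) - k := by omega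

lemma ncard_thr (n : ℕ) (hn : 1 ≤ n) (T : ℕ) [NeZero T] (hnT : n < T) :
    ({x : Fin n → ℤ | Thr n (T:ℤ) x}.ncard : ℤ) = ((T:ℤ) - n) * (T:ℤ) ^ (n - 1) := by
  rw [thr_set_eq n T hnT, Set.ncard_coe_finset]
  rw [Finset.card_image_of_injOn]
  · exact card_goods hn hnT
  · intro f hf g hg h
    funext m
    apply ZMod.val_injective
    have := congrFun h m
    simp only [] at this
    omega

end Stmt0Aux

/-- For `n ≥ 1`, `t : ℤ` and
`B_t = {j ∈ ℤ^n | 1 ≤ j_k ≤ t - k for all 1 ≤ k ≤ n}`,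
if `t ≥ n+1` then `#(⋃ σ, σ(B_t)) = (t-n)·t^(n-1)`, and if `t ≤ n` the union is empty. -/
theorem stmt_0 (n : ℕ) (hn : 1 ≤ n) (t : ℤ) :
    ((n : ℤ) + 1 ≤ t →
      (((⋃ σ : Equiv.Perm (Fin n), (fun j => j ∘ σ) ''
          {j : Fin n → ℤ | ∀ k : Fin n, 1 ≤ j k ∧ j k ≤ t - ((k.val : ℤ) + 1)}).ncard : ℤ)
        = (t - (n : ℤ)) * t ^ (n - 1))) ∧
    (t ≤ (n : ℤ) →
      (⋃ σ : Equiv.Perm (Fin n), (fun j => j ∘ σ) ''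
          {j : Fin n → ℤ | ∀ k : Fin n, 1 ≤ j k ∧ j k ≤ t - ((k.val : ℤ) + 1)}) = ∅) := by
  constructor
  · intro ht
    set T : ℕ := t.toNat with hT
    have htT : (T : ℤ) = t := Int.toNat_of_nonneg (by omega)
    have hnT : n < T := by omega
    haveI : NeZero T := ⟨by omega⟩
    have hsets : (⋃ σ : Equiv.Perm (Fin n), (fun j => j ∘ σ) ''
          {j : Fin n → ℤ | ∀ k : Fin n, 1 ≤ j k ∧ j k ≤ t - ((k.val : ℤ) + 1)})
        = {x : Fin n → ℤ | Stmt0Aux.Thr n (T:ℤ) x} := by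
      ext x
      rw [Stmt0Aux.mem_union_iff n t x, htT]
      exact Stmt0Aux.exists_perm_iff_thr n hn t (by omega) x
    rw [hsets, Stmt0Aux.ncard_thr n hn T hnT, htT]
  · intro ht
    ext x
    simp only [Set.mem_empty_iff_false, iff_false]
    intro hx
    obtain ⟨σ, hσ⟩ := (Stmt0Aux.mem_union_iff n t x).1 hx
    set k : Fin n := ⟨n - 1, by omega⟩ with hk
    have := hσ (σ.symm k)
    rw [Equiv.apply_symm_apply] at this
    have hkv : (k.val : ℤ) = (n : ℤ) - 1 := by simp [hk]; omega
    omega
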